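/- Fix m ≥ 1 and let A = {nᵐ : n ≥ 1}. For any partition of A into two subsets, at least one subset contains infinitely many triples of distinct elements in geometric progression; precisely, the set of pairs (x, d) such that x, x·d, x·d² (d ≥ 2) all lie in that subset is infinite. -/

import Mathlib

set_option maxRecDepth 10000 in
lemma vdw9 (g : Fin 9 → Bool) : ∃ a d : Fin 9, 1 ≤ (d:ℕ) ∧ (a:ℕ) + 2*(d:ℕ) ≤ 8 ∧
    g a = g ⟨((a:ℕ)+(d:ℕ)) % 9, Nat.mod_lt _ (by norm_num)⟩ ∧
    g a = g ⟨((a:ℕ)+2*(d:ℕ)) % 9, Nat.mod_lt _ (by norm_num)⟩ := by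
  revert g; decide

theorem stmt_10 (m : ℕ) (hm : 1 ≤ m) (M₁ M₂ : Set ℕ)
    (hpart : M₁ ∪ M₂ = {x : ℕ | ∃ n : ℕ, 1 ≤ n ∧ x = n ^ m}) :
    {p : ℕ × ℕ | 2 ≤ p.2 ∧ p.1 ∈ M₁ ∧ p.1 * p.2 ∈ M₁ ∧ p.1 * p.2 ^ 2 ∈ M₁}.Infinite ∨
    {p : ℕ × ℕ | 2 ≤ p.2 ∧ p.1 ∈ M₂ ∧ p.1 * p.2 ∈ M₂ ∧ p.1 * p.2 ^ 2 ∈ M₂}.Infinite := by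
  classical
  have hA : ∀ k : ℕ, 2 ^ (k * m) ∈ M₁ ∪ M₂ := by
    intro k
    rw [hpart]
    exact ⟨2 ^ k, Nat.one_le_two_pow, by rw [← pow_mul]⟩
  set c : ℕ → Bool := fun a => decide (2 ^ (a * m) ∈ M₁) with hc
  have hcolT : ∀ a : ℕ, c a = true → 2 ^ (a*m) ∈ M₁ := by
    intro a h
    simpa [hc] using h
  have hcolF : ∀ a : ℕ, c a = false → 2 ^ (a*m) ∈ M₂ := by
    intro a h
    rcases hA a with h1 | h2
    · simp [hc, h1] at h
    · exact h2
  have hstep : ∀ N : ℕ, ∃ a d : ℕ, a + 2*d ≤ 8 ∧ 1 ≤ d ∧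
      c (9*N+a) = c (9*N+(a+d)) ∧ c (9*N+a) = c (9*N+(a+2*d)) := by
    intro N
    obtain ⟨a, d, hd, hle, h1, h2⟩ := vdw9 (fun i => c (9*N + i))
    have e1 : ((a:ℕ)+(d:ℕ)) % 9 = (a:ℕ)+(d:ℕ) := Nat.mod_eq_of_lt (by omega)
    have e2 : ((a:ℕ)+2*(d:ℕ)) % 9 = (a:ℕ)+2*(d:ℕ) := Nat.mod_eq_of_lt (by omega)
    refine ⟨a, d, hle, hd, ?_, ?_⟩
    · simpa [e1] using h1
    · simpa [e2] using h2
  choose a d ha hd h1 h2 using hstep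
  set F : ℕ → ℕ × ℕ := fun N => (2 ^ ((9*N + a N) * m), 2 ^ (d N * m)) with hF
  have hdm : ∀ N, 1 ≤ d N * m := fun N => Nat.one_le_iff_ne_zero.mpr (by
    have := hd N; positivity)
  have hD2 : ∀ N, 2 ≤ 2 ^ (d N * m) := by
    intro N
    calc 2 = 2^1 := by norm_num
    _ ≤ 2 ^ (d N * m) := Nat.pow_le_pow_right (by norm_num) (hdm N)
  have hmul1 : ∀ N, 2 ^ ((9*N + a N) * m) * 2 ^ (d N * m) = 2 ^ ((9*N + (a N + d N)) * m) := by
    intro N; rw [← pow_add]; ring_nf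
  have hmul2 : ∀ N, 2 ^ ((9*N + a N) * m) * (2 ^ (d N * m))^2 = 2 ^ ((9*N + (a N + 2 * d N)) * m) := by
    intro N; rw [← pow_mul, ← pow_add]; ring_nf
  have hmem : ∀ N, F N ∈ {p : ℕ × ℕ | 2 ≤ p.2 ∧ p.1 ∈ M₁ ∧ p.1 * p.2 ∈ M₁ ∧ p.1 * p.2 ^ 2 ∈ M₁} ∪
      {p : ℕ × ℕ | 2 ≤ p.2 ∧ p.1 ∈ M₂ ∧ p.1 * p.2 ∈ M₂ ∧ p.1 * p.2 ^ 2 ∈ M₂} := by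
    intro N
    cases hcase : c (9*N + a N) with
    | true =>
      left
      refine ⟨hD2 N, hcolT _ hcase, ?_, ?_⟩
      · rw [hF]; dsimp only; rw [hmul1 N]
        exact hcolT _ ((h1 N).symm.trans hcase)
      · rw [hF]; dsimp only; rw [hmul2 N]
        exact hcolT _ ((h2 N).symm.trans hcase)
    | false =>
      right
      refine ⟨hD2 N, hcolF _ hcase, ?_, ?_⟩
      · rw [hF]; dsimp only; rw [hmul1 N]
        exact hcolF _ ((h1 N).symm.trans hcase)
      · rw [hF]; dsimp only; rw [hmul2 N]
        exact hcolF _ ((h2 N).symm.trans hcase)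
  have hinj : Function.Injective F := by
    intro N N' hNN
    have h1' : 2 ^ ((9*N + a N) * m) = 2 ^ ((9*N' + a N') * m) := congrArg Prod.fst hNN
    have h2' : (9*N + a N) * m = (9*N' + a N') * m :=
      Nat.pow_right_injective (le_refl 2) h1'
    have h3' : 9*N + a N = 9*N' + a N' := Nat.eq_of_mul_eq_mul_right (by omega) h2'
    have := ha N; have := ha N'
    omega
  by_contra hcon
  push_neg at hcon
  obtain ⟨hc1, hc2⟩ := hcon
  exact Set.infinite_of_injective_forall_mem hinj hmem (hc1.union hc2)
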